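/- Let G be a finitely generated group such that for every g in G the twisted conjugacy class [e]_g = {[x,g] : x ∈ G} is a subgroup of G. If G satisfies the descending chain condition on normal subgroups (there is no infinite strictly descending chain H₁ > H₂ > H₃ > … of normal subgroups of G), then G is nilpotent. -/

import Mathlib

open scoped commutatorElement

/-- The twisted conjugacy class of the identity under the inner automorphism
induced by `g`: `[e]_g = {⁅x, g⁆ : x ∈ G}`. -/
def twistedClass {G : Type*} [Group G] (g : G) : Set G :=
  {y : G | ∃ x : G, y = ⁅x, g⁆}

section Aux

variable {G : Type*} [Group G]

lemma tc_mem_iff {H : Subgroup G} {g : G} (hH : (H : Set G) = twistedClass g) (z : G) :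
    z ∈ H ↔ ∃ x : G, z = ⁅x, g⁆ := by
  rw [← SetLike.mem_coe, hH]; rfl

/-- The subgroup whose carrier is a twisted conjugacy class is normal. -/
lemma tc_normal {H : Subgroup G} {g : G} (hH : (H : Set G) = twistedClass g) :
    H.Normal := by
  constructor
  intro z hz c
  obtain ⟨x, rfl⟩ := (tc_mem_iff hH z).mp hz
  have h1 : ⁅c * x, g⁆ ∈ H := (tc_mem_iff hH _).mpr ⟨c * x, rfl⟩
  have h2 : ⁅c, g⁆ ∈ H := (tc_mem_iff hH _).mpr ⟨c, rfl⟩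
  have key : c * ⁅x, g⁆ * c⁻¹ = ⁅c * x, g⁆ * ⁅c, g⁆⁻¹ := by
    simp only [commutatorElement_def]; group
  rw [key]
  exact H.mul_mem h1 (H.inv_mem h2)

/-- If `g` belongs to the subgroup that is its own twisted class, then `g = 1`. -/
lemma tc_self_mem_eq_one {H : Subgroup G} {g : G} (hH : (H : Set G) = twistedClass g)
    (hg : g ∈ H) : g = 1 := by
  obtain ⟨y, hy⟩ := (tc_mem_iff hH g⁻¹).mp (H.inv_mem hg)
  -- g⁻¹ = y * g * y⁻¹ * g⁻¹  ⇒  1 = y * g * y⁻¹ ⇒ g = 1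
  have h1 : (1 : G) = y * g * y⁻¹ := by
    have := hy
    rw [commutatorElement_def] at this
    calc (1 : G) = g⁻¹ * g := by group
    _ = (y * g * y⁻¹ * g⁻¹) * g := by rw [← this]
    _ = y * g * y⁻¹ := by group
  have : y⁻¹ * 1 * y = y⁻¹ * (y * g * y⁻¹) * y := by rw [h1]
  calc g = y⁻¹ * (y * g * y⁻¹) * y := by group
  _ = y⁻¹ * 1 * y := by rw [h1]
  _ = 1 := by group

/-- Uniform bound: a finite subset of `⨆ n, Subgroup.upperCentralSeries G n` lies in a single term. -/
lemma finite_subset_ucs {T : Set G} (hT : T.Finite) :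
    T ⊆ ↑(⨆ n, Subgroup.upperCentralSeries G n) → ∃ c, ∀ t ∈ T, t ∈ Subgroup.upperCentralSeries G c := by
  refine Set.Finite.induction_on
    (motive := fun T _ => T ⊆ ↑(⨆ n, Subgroup.upperCentralSeries G n) →
      ∃ c, ∀ t ∈ T, t ∈ Subgroup.upperCentralSeries G c) T hT (fun _ => ⟨0, by simp⟩) ?_
  intro a s _ _ ih hsub
  obtain ⟨c₁, hc₁⟩ := ih (fun t ht => hsub (Set.mem_insert_of_mem a ht))
  have ha : a ∈ ⨆ n, Subgroup.upperCentralSeries G n := hsub (Set.mem_insert a s)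
  rw [Subgroup.mem_iSup_of_directed ((Subgroup.upperCentralSeries_mono G).directed_le)] at ha
  obtain ⟨c₂, hc₂⟩ := ha
  refine ⟨max c₁ c₂, ?_⟩
  rintro t (rfl | ht)
  · exact Subgroup.upperCentralSeries_mono G (le_max_right c₁ c₂) hc₂
  · exact Subgroup.upperCentralSeries_mono G (le_max_left c₁ c₂) (hc₁ t ht)

/-- Key lemma: if all commutators `⁅s, m⁆` with the generators lie in the
ω-hypercenter, then `m` lies in the ω-hypercenter.  This uses the crossed
homomorphism identity for commutators and finite generation. -/
lemma mem_hypercenter_of_gen_comm {S : Set G} (hSc : Subgroup.closure S = ⊤)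
    (hSfin : S.Finite) {m : G}
    (hm : ∀ s ∈ S, ⁅s, m⁆ ∈ ⨆ n, Subgroup.upperCentralSeries G n) :
    m ∈ ⨆ n, Subgroup.upperCentralSeries G n := by
  -- bound all generator commutators in a single term of the upper central series
  have himg : ((fun s => ⁅s, m⁆) '' S).Finite := hSfin.image _
  obtain ⟨c, hc⟩ := finite_subset_ucs himg (by
    rintro t ⟨s, hs, rfl⟩
    exact hm s hs)
  -- the normal closure of those commutators is inside `Subgroup.upperCentralSeries G c`
  set W : Subgroup G := Subgroup.normalClosure ((fun s => ⁅s, m⁆) '' S) with hW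
  have hWnormal : W.Normal := Subgroup.normalClosure_normal
  have hWle : W ≤ Subgroup.upperCentralSeries G c :=
    Subgroup.normalClosure_le_normal (fun t ht => hc t ht)
  -- every commutator `⁅x, m⁆` lies in `W`, by induction over the generators
  have hall : ∀ x : G, ⁅x, m⁆ ∈ W := by
    intro x
    have hx : x ∈ Subgroup.closure S := hSc ▸ Subgroup.mem_top x
    induction hx using Subgroup.closure_induction with
    | mem s hs => exact Subgroup.subset_normalClosure ⟨s, hs, rfl⟩
    | one =>
        have : ⁅(1 : G), m⁆ = 1 := by simp only [commutatorElement_def]; group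
        rw [this]; exact W.one_mem
    | mul x y hx hy ihx ihy =>
        have key : ⁅x * y, m⁆ = x * ⁅y, m⁆ * x⁻¹ * ⁅x, m⁆ := by
          simp only [commutatorElement_def]; group
        rw [key]
        exact W.mul_mem (hWnormal.conj_mem _ ihy x) ihx
    | inv x hx ihx =>
        have key : ⁅x⁻¹, m⁆ = x⁻¹ * ⁅x, m⁆⁻¹ * x := by
          simp only [commutatorElement_def]; group
        rw [key]
        have : x⁻¹ * ⁅x, m⁆⁻¹ * (x⁻¹)⁻¹ ∈ W := hWnormal.conj_mem _ (W.inv_mem ihx) x⁻¹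
        simpa using this
  -- hence `m` is in the `(c+1)`-st term
  have hmem : m ∈ Subgroup.upperCentralSeries G (c + 1) := by
    rw [Subgroup.mem_upperCentralSeries_succ_iff]
    intro y
    have : ⁅m, y⁆ ∈ Subgroup.upperCentralSeries G c := by
      rw [← commutatorElement_inv]
      exact (Subgroup.upperCentralSeries G c).inv_mem (hWle (hall y))
    simpa only [commutatorElement_def] using this
  exact le_iSup (fun n => Subgroup.upperCentralSeries G n) (c + 1) hmem

/-- From the descending chain condition we may extract minimal elements of any
nonempty family of normal subgroups. -/
lemma exists_minimal_normal
    (hmin : ¬∃ f : ℕ → Subgroup G, (∀ i, (f i).Normal) ∧ ∀ i, f (i + 1) < f i)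
    (P : Subgroup G → Prop) (hP : ∀ N, P N → N.Normal) (hne : ∃ N, P N) :
    ∃ M, P M ∧ ∀ N, P N → ¬N < M := by
  by_contra hc
  push_neg at hc
  obtain ⟨N₀, hN₀⟩ := hne
  -- every member of the family has a strictly smaller member: build a chain
  have hstep : ∀ M : {N : Subgroup G // P N}, ∃ N : {N : Subgroup G // P N}, N.1 < M.1 := by
    intro M
    obtain ⟨N, hN, hlt⟩ := hc M.1 M.2
    exact ⟨⟨N, hN⟩, hlt⟩
  choose step hstep' using hstep
  let f : ℕ → {N : Subgroup G // P N} := fun n => Nat.rec ⟨N₀, hN₀⟩ (fun _ p => step p) n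
  refine hmin ⟨fun i => (f i).1, fun i => hP _ (f i).2, fun i => ?_⟩
  exact hstep' (f i)

end Aux

theorem stmt_15 {G : Type*} [Group G] (hfg : Group.FG G)
    (h : ∀ g : G, ∃ H : Subgroup G, (H : Set G) = twistedClass g)
    (hmin : ¬∃ f : ℕ → Subgroup G, (∀ i, (f i).Normal) ∧ ∀ i, f (i + 1) < f i) :
    Group.IsNilpotent G := by
  classical
  obtain ⟨S, hSc, hSfin⟩ := Group.fg_iff.mp hfg
  -- the ω-hypercenter
  set J : Subgroup G := ⨆ n, Subgroup.upperCentralSeries G n with hJdef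
  haveI hJnormal : J.Normal := by
    constructor
    intro x hx c
    rw [hJdef, Subgroup.mem_iSup_of_directed ((Subgroup.upperCentralSeries_mono G).directed_le)] at hx ⊢
    obtain ⟨n, hn⟩ := hx
    exact ⟨n, (inferInstance : (Subgroup.upperCentralSeries G n).Normal).conj_mem x hn c⟩
  -- Main claim : J = ⊤
  have hJtop : J = ⊤ := by
    by_contra hne
    -- pass to the quotient Q = G / J, a nontrivial group
    set Q := G ⧸ J with hQdef
    have hQnontriv : ∃ q : Q, q ≠ 1 := by
      by_contra hq
      push_neg at hq
      apply hne
      rw [eq_top_iff]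
      intro x _
      have := hq (QuotientGroup.mk' J x)
      rwa [← QuotientGroup.eq_one_iff x]
    -- the quotient inherits the dcc for normal subgroups
    have hminQ : ¬∃ f : ℕ → Subgroup Q, (∀ i, (f i).Normal) ∧ ∀ i, f (i + 1) < f i := by
      rintro ⟨f, hfnorm, hflt⟩
      refine hmin ⟨fun i => (f i).comap (QuotientGroup.mk' J), fun i => (hfnorm i).comap _,
        fun i => ?_⟩
      have hle : (f (i + 1)).comap (QuotientGroup.mk' J) ≤ (f i).comap (QuotientGroup.mk' J) :=
        Subgroup.comap_mono (hflt i).le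
      refine lt_of_le_of_ne hle (fun heq => (hflt i).ne ?_)
      exact Subgroup.comap_injective (QuotientGroup.mk'_surjective J) heq
    -- the quotient inherits the twisted class hypothesis
    have hQ : ∀ g : Q, ∃ H : Subgroup Q, (H : Set Q) = twistedClass g := by
      intro gbar
      obtain ⟨g, rfl⟩ := QuotientGroup.mk'_surjective J gbar
      obtain ⟨H, hH⟩ := h g
      refine ⟨H.map (QuotientGroup.mk' J), ?_⟩
      ext z
      constructor
      · rintro ⟨w, hw, rfl⟩
        obtain ⟨x, rfl⟩ := (tc_mem_iff hH w).mp hw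
        exact ⟨QuotientGroup.mk' J x, (map_commutatorElement (QuotientGroup.mk' J) x g).symm⟩
      · rintro ⟨xbar, rfl⟩
        obtain ⟨x, rfl⟩ := QuotientGroup.mk'_surjective J xbar
        exact ⟨⁅x, g⁆, (tc_mem_iff hH _).mpr ⟨x, rfl⟩, map_commutatorElement (QuotientGroup.mk' J) x g⟩
    -- take a minimal nontrivial normal subgroup of Q
    obtain ⟨M, ⟨hMnorm, hMne⟩, hMmin⟩ :=
      exists_minimal_normal (G := Q) hminQ (fun N => N.Normal ∧ N ≠ ⊥)
        (fun N hN => hN.1)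
        ⟨⊤, ⟨fun _ _ g => Subgroup.mem_top _⟩, by
          obtain ⟨q, hq⟩ := hQnontriv
          intro htop
          exact hq ((Subgroup.eq_bot_iff_forall _).mp htop q (Subgroup.mem_top q))⟩
    -- pick a nontrivial element of M
    have hMex : ∃ m : Q, m ∈ M ∧ m ≠ 1 := by
      by_contra hM
      push_neg at hM
      exact hMne ((Subgroup.eq_bot_iff_forall _).mpr hM)
    obtain ⟨mbar, hmbarM, hmbar1⟩ := hMex
    -- the twisted class of mbar is a normal subgroup contained in M
    obtain ⟨H, hH⟩ := hQ mbar
    have hHnormal : H.Normal := tc_normal hH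
    have hHle : H ≤ M := by
      intro z hz
      obtain ⟨x, rfl⟩ := (tc_mem_iff hH z).mp hz
      have : x * mbar * x⁻¹ * mbar⁻¹ ∈ M :=
        M.mul_mem (hMnorm.conj_mem mbar hmbarM x) (M.inv_mem hmbarM)
      simpa only [commutatorElement_def] using this
    -- by minimality, H is trivial (otherwise H = M ∋ mbar forces mbar = 1)
    have hHbot : H = ⊥ := by
      by_contra hHne
      have : H = M := le_antisymm hHle (by
        by_contra hMH
        exact hMmin H ⟨hHnormal, hHne⟩ (lt_of_le_of_ne hHle (fun hEq => hMH hEq.ge)))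
      exact hmbar1 (tc_self_mem_eq_one hH (this ▸ hmbarM))
    -- hence mbar is central in Q
    have hcentral : ∀ x : Q, ⁅x, mbar⁆ = 1 := by
      intro x
      have : ⁅x, mbar⁆ ∈ H := (tc_mem_iff hH _).mpr ⟨x, rfl⟩
      rwa [hHbot, Subgroup.mem_bot] at this
    -- lift to G : all commutators with m lie in J, hence m ∈ J, contradiction
    obtain ⟨m, rfl⟩ := QuotientGroup.mk'_surjective J mbar
    have hcomm : ∀ s ∈ S, ⁅s, m⁆ ∈ ⨆ n, Subgroup.upperCentralSeries G n := by
      intro s _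
      have : (QuotientGroup.mk' J) ⁅s, m⁆ = 1 := by
        rw [map_commutatorElement]
        exact hcentral _
      exact (QuotientGroup.eq_one_iff _).mp this
    have : m ∈ J := mem_hypercenter_of_gen_comm hSc hSfin hcomm
    exact hmbar1 ((QuotientGroup.eq_one_iff m).mpr this)
  -- conclude : the generators lie in a single term of the upper central series
  obtain ⟨c, hc⟩ := finite_subset_ucs hSfin (by
    intro s _
    have : s ∈ J := hJtop ▸ Subgroup.mem_top s
    exact this)
  have : Subgroup.upperCentralSeries G c = ⊤ := by
    rw [eq_top_iff, ← hSc]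
    exact (Subgroup.closure_le _).mpr (fun s hs => hc s hs)
  exact ⟨⟨c, this⟩⟩
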